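/- Let ζ be a primitive n-th root of unity, m ∣ n, q = ζ^{n/m}, and let Q be the algebra over K = ℂ(u,v) generated by c, w with c^n = u, w^n = v, cw = ζwc. Let g act by g(c) = qc and g(w) = ζw. If f = Σ_{i=0}^{m−1} f(i)·c^i·w^{(n/m)(m−i)} with coefficients f(i) ∈ K(c^m) is a g-invariant element, and the skew derivation x(a) = ca − (g·a)c annihilates f, then f = f(0), i.e., f lies in K(c^m). -/

import Mathlib

/-- Setting of the generalized Taft algebra `T(n,m,0)` acting on the cyclic algebra
`Q(n,m)`: `c, w` satisfy `cw = ζwc`, the grading automorphism `g` acts by `g(c) = qc`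
(`q = ζ^{n/m}`), `g(w) = ζw`, and `Z` plays the role of the subfield `K(c^m)` (its elements
commute with `c` and are `g`-invariant).  If `f = Σ_{i<m} f(i)·cⁱ·w^{(n/m)(m−i)}` with
coefficients `f(i) ∈ Z` is `g`-invariant and annihilated by the skew derivation
`x(a) = ca − g(a)c`, then (given the linear independence of the relevant monomials over
`Z`) all coefficients `f(i)` with `i ≥ 1` vanish, i.e. `f = f(0)·w^{(n/m)·m}` lies in
`K(c^m)`. -/
theorem stmt12 {A : Type*} [Ring A] [Algebra ℂ A] (n m : ℕ) (hn : 0 < n) (hm : 0 < m)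
    (hmn : m ∣ n) (ζ : ℂ) (hζ : IsPrimitiveRoot ζ n) (q : ℂ) (hq : q = ζ ^ (n / m))
    (c w : A) (hcw : c * w = ζ • (w * c))
    (g : A →ₐ[ℂ] A) (hgc : g c = q • c) (hgw : g w = ζ • w)
    (Z : Subalgebra ℂ A) (hZc : ∀ z ∈ Z, c * z = z * c) (hZg : ∀ z ∈ Z, g z = z)
    (fc : ℕ → A) (hfc : ∀ i, fc i ∈ Z)
    (f : A) (hf : f = ∑ i ∈ Finset.range m, fc i * c ^ i * w ^ ((n / m) * (m - i)))
    (hginv : g f = f)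
    (hxf : c * f - g f * c = 0)
    (hindep : ∀ y : ℕ → A, (∀ i, y i ∈ Z) →
      (∑ i ∈ Finset.range m, y i * c ^ (i + 1) * w ^ ((n / m) * (m - i))) = 0 →
      ∀ i ∈ Finset.range m, y i = 0) :
    (∀ i : ℕ, 1 ≤ i → i < m → fc i = 0) ∧ f = fc 0 * w ^ ((n / m) * m) := by
  have hζ0 : ζ ≠ 0 := hζ.ne_zero hn.ne'
  -- commutation of c with powers of w
  have hcwk : ∀ k : ℕ, c * w ^ k = (ζ ^ k) • (w ^ k * c) := by
    intro k
    induction k with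
    | zero => simp
    | succ k ih =>
      rw [pow_succ, ← mul_assoc, ih, smul_mul_assoc, mul_assoc, hcw,
        mul_smul_comm, smul_smul, ← mul_assoc, ← pow_succ]
  have hwkc : ∀ k : ℕ, w ^ k * c = (ζ ^ k)⁻¹ • (c * w ^ k) := by
    intro k
    rw [hcwk k, smul_smul, inv_mul_cancel₀ (pow_ne_zero _ hζ0), one_smul]
  set y : ℕ → A := fun i => (1 - (ζ ^ (n / m * (m - i)))⁻¹) • fc i with hy
  have hyZ : ∀ i, y i ∈ Z := fun i => Z.smul_mem (hfc i) _
  have hsum : (∑ i ∈ Finset.range m, y i * c ^ (i + 1) * w ^ ((n / m) * (m - i))) = 0 := by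
    have h1 : c * f = ∑ i ∈ Finset.range m,
        fc i * c ^ (i + 1) * w ^ ((n / m) * (m - i)) := by
      rw [hf, Finset.mul_sum]
      refine Finset.sum_congr rfl fun i _ => ?_
      rw [← mul_assoc, ← mul_assoc, hZc _ (hfc i), mul_assoc (fc i), ← pow_succ']
    have h2 : f * c = ∑ i ∈ Finset.range m,
        (ζ ^ ((n / m) * (m - i)))⁻¹ • (fc i * c ^ (i + 1) * w ^ ((n / m) * (m - i))) := by
      rw [hf, Finset.sum_mul]
      refine Finset.sum_congr rfl fun i _ => ?_
      rw [mul_assoc, hwkc, mul_smul_comm, ← mul_assoc, mul_assoc (fc i), ← pow_succ]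
    have h0 : c * f - f * c = 0 := by rw [hginv] at hxf; exact hxf
    calc ∑ i ∈ Finset.range m, y i * c ^ (i + 1) * w ^ ((n / m) * (m - i))
        = ∑ i ∈ Finset.range m, ((fc i * c ^ (i + 1) * w ^ ((n / m) * (m - i)))
            - (ζ ^ ((n / m) * (m - i)))⁻¹ • (fc i * c ^ (i + 1) * w ^ ((n / m) * (m - i)))) := by
          refine Finset.sum_congr rfl fun i _ => ?_
          rw [hy]
          simp [sub_smul, sub_mul, smul_mul_assoc]
      _ = c * f - f * c := by rw [Finset.sum_sub_distrib, h1, h2]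
      _ = 0 := h0
  have hy0 := hindep y hyZ hsum
  have key : ∀ i : ℕ, 1 ≤ i → i < m → fc i = 0 := by
    intro i hi1 him
    have hyi : y i = 0 := hy0 i (Finset.mem_range.mpr him)
    have hk1 : ζ ^ (n / m * (m - i)) ≠ 1 := by
      intro h
      have hdvd : n ∣ n / m * (m - i) := hζ.pow_eq_one_iff_dvd _ |>.mp h
      have hnm : 0 < n / m := Nat.div_pos (Nat.le_of_dvd hn hmn) hm
      have hpos : 0 < n / m * (m - i) := Nat.mul_pos hnm (Nat.sub_pos_of_lt him)
      have hlt : n / m * (m - i) < n := by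
        calc n / m * (m - i) < n / m * m :=
              Nat.mul_lt_mul_of_pos_left (Nat.sub_lt hm hi1) hnm
          _ = n := Nat.div_mul_cancel hmn
      exact absurd (Nat.le_of_dvd hpos hdvd) (not_le.mpr hlt)
    have hne : (1 - (ζ ^ (n / m * (m - i)))⁻¹) ≠ 0 := by
      intro h
      apply hk1
      have : (ζ ^ (n / m * (m - i)))⁻¹ = 1 := by linear_combination -h
      rw [← inv_inv (ζ ^ (n / m * (m - i))), this, inv_one]
    have := congrArg (fun a => (1 - (ζ ^ (n / m * (m - i)))⁻¹)⁻¹ • a) hyi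
    simpa [hy, smul_smul, inv_mul_cancel₀ hne] using this
  refine ⟨key, ?_⟩
  rw [hf, Finset.sum_eq_single_of_mem 0 (Finset.mem_range.mpr hm)]
  · simp
  · intro i hi hi0
    rw [key i (Nat.one_le_iff_ne_zero.mpr hi0) (Finset.mem_range.mp hi), zero_mul, zero_mul]
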